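/- Let n ≥ 1, m > 0, β₁, β₂ ∈ ℝ, and let γ : ℝⁿ → ℝⁿ be the rank vector defined by γ_j(s) = n⁻¹ Σ_{i=1}^n p_ij(s), where p_ij(s) = exp(u_ij(s)) / Σ_{k=1}^n exp(u_ik(s)) and u_ij(s) = β₁ s_j + β₂ (s_i − s_j)². Define f(s) = m γ(s) − s. Then f is differentiable at s₀ = (m/n)𝟙 with Jacobian Df(s₀) = (mβ₁/n)(I − n⁻¹E) − I, and for n ≥ 2 all eigenvalues of the symmetric matrix Df(s₀) are strictly negative if and only if β₁ < n/m. -/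

import Mathlib

open Matrix

section Aux

variable {n : ℕ} {m β₁ β₂ : ℝ}

private noncomputable def pr (n : ℕ) (k : Fin n) : (Fin n → ℝ) →L[ℝ] ℝ :=
  ContinuousLinearMap.proj k

private lemma aux_hasFDerivAt (hn : 0 < n) (m β₁ β₂ : ℝ) (j : Fin n) :
    HasFDerivAt
      (fun s : Fin n → ℝ => m * ((n : ℝ)⁻¹ *
        ∑ i, Real.exp (β₁ * s j + β₂ * (s i - s j) ^ 2) /
          ∑ k, Real.exp (β₁ * s k + β₂ * (s i - s k) ^ 2)) - s j)
      ((m * β₁ / n) • pr n j - (m * β₁ / n ^ 2) • (∑ k, pr n k) - pr n j)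
      (fun _ => m / n) := by
  have hne : (n : ℝ) ≠ 0 := Nat.cast_ne_zero.mpr hn.ne'
  set x₀ : Fin n → ℝ := fun _ => m / n with hx₀
  set c : ℝ := Real.exp (β₁ * (m / n)) with hc
  have hcpos : 0 < c := Real.exp_pos _
  -- derivative of the affine+quadratic exponent
  have hA : ∀ i k : Fin n, HasFDerivAt
      (fun s : Fin n → ℝ => β₁ * s k + β₂ * (s i - s k) ^ 2) (β₁ • pr n k) x₀ := by
    intro i k
    have h1 : HasFDerivAt (fun s : Fin n → ℝ => s k) (pr n k) x₀ := hasFDerivAt_apply k x₀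
    have h2 : HasFDerivAt (fun s : Fin n → ℝ => s i) (pr n i) x₀ := hasFDerivAt_apply i x₀
    have h3 : HasFDerivAt (fun s : Fin n → ℝ => (s i - s k) ^ 2)
        (((2 : ℕ) * (x₀ i - x₀ k) ^ 1 : ℝ) • (pr n i - pr n k)) x₀ :=
      by have hp2 : HasDerivAt (fun x : ℝ => x ^ 2) (((2 : ℕ) : ℝ) * (x₀ i - x₀ k) ^ 1) (x₀ i - x₀ k) :=
           hasDerivAt_pow 2 _
         exact hp2.comp_hasFDerivAt x₀ (h2.fun_sub h1)
    have := (h1.const_mul β₁).fun_add (h3.const_mul β₂)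
    refine this.congr_fderiv ?_
    ext v
    simp [hx₀]
  -- derivative of exp of the exponent
  have hExp : ∀ i k : Fin n, HasFDerivAt
      (fun s : Fin n → ℝ => Real.exp (β₁ * s k + β₂ * (s i - s k) ^ 2))
      ((c * β₁) • pr n k) x₀ := by
    intro i k
    have := (hA i k).exp
    refine this.congr_fderiv ?_
    ext v
    simp [hx₀, hc, smul_smul]
  -- derivative of the denominator
  have hS : ∀ i : Fin n, HasFDerivAt
      (fun s : Fin n → ℝ => ∑ k, Real.exp (β₁ * s k + β₂ * (s i - s k) ^ 2))
      ((c * β₁) • ∑ k, pr n k) x₀ := by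
    intro i
    have := HasFDerivAt.fun_sum (u := Finset.univ) (fun k _ => hExp i k)
    refine this.congr_fderiv ?_
    rw [Finset.smul_sum]
  -- value of the denominator at x₀
  have hSx : ∀ i : Fin n,
      (∑ k, Real.exp (β₁ * x₀ k + β₂ * (x₀ i - x₀ k) ^ 2)) = n * c := by
    intro i
    simp [hx₀, hc, Finset.sum_const, mul_comm]
  have hSne : ∀ i : Fin n,
      (∑ k, Real.exp (β₁ * x₀ k + β₂ * (x₀ i - x₀ k) ^ 2)) ≠ 0 := by
    intro i; rw [hSx i]; positivity
  -- derivative of each quotient p_ij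
  have hP : ∀ i : Fin n, HasFDerivAt
      (fun s : Fin n → ℝ => Real.exp (β₁ * s j + β₂ * (s i - s j) ^ 2) /
        ∑ k, Real.exp (β₁ * s k + β₂ * (s i - s k) ^ 2))
      ((β₁ / n) • pr n j - (β₁ / n ^ 2) • ∑ k, pr n k) x₀ := by
    intro i
    have hinv : HasFDerivAt
        (fun s : Fin n → ℝ => (∑ k, Real.exp (β₁ * s k + β₂ * (s i - s k) ^ 2))⁻¹)
        ((-(((n : ℝ) * c) ^ 2)⁻¹) • ((c * β₁) • ∑ k, pr n k)) x₀ := by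
      have := (hasDerivAt_inv (x := (n : ℝ) * c) (by positivity)).comp_hasFDerivAt_of_eq
        x₀ (hS i) (hSx i).symm
      exact this
    have hmul := (hExp i j).fun_mul hinv
    simp only [div_eq_mul_inv]
    refine hmul.congr_fderiv ?_
    ext v
    have h1 : Real.exp (β₁ * x₀ j + β₂ * (x₀ i - x₀ j) ^ 2) = c := by
      simp [hx₀, hc]
    rw [hSx i]
    simp only [ContinuousLinearMap.sub_apply, ContinuousLinearMap.smul_apply,
      ContinuousLinearMap.add_apply, ContinuousLinearMap.coe_sum', Finset.sum_apply,
      smul_eq_mul, h1]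
    field_simp
    ring
  -- assemble the component derivative
  have hsum := HasFDerivAt.fun_sum (u := Finset.univ) (fun i _ => hP i)
  have hfinal := ((hsum.const_mul ((n : ℝ)⁻¹)).const_mul m).fun_sub (hasFDerivAt_apply j x₀)
  refine hfinal.congr_fderiv ?_
  ext v
  simp only [ContinuousLinearMap.sub_apply, ContinuousLinearMap.smul_apply,
    ContinuousLinearMap.coe_sum', Finset.sum_apply, smul_eq_mul,
    Finset.sum_const, Finset.card_univ, Fintype.card_fin, nsmul_eq_mul,
    pr, ContinuousLinearMap.proj_apply]
  field_simp

end Aux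

/-- **Linear stability for the in-degree score.** For `n ≥ 1`, `m > 0`, and the rank
vector `γ` induced by utilities `u_ij(s) = β₁ s_j + β₂ (s_i − s_j)²`, the drift
`f(s) = m γ(s) − s` is differentiable at `s₀ = (m/n)𝟙` with Jacobian
`Df(s₀) = (mβ₁/n)(I − n⁻¹E) − I`, and for `n ≥ 2` all eigenvalues of this symmetric
matrix are strictly negative iff `β₁ < n/m`. -/
theorem degree_score_stability (n : ℕ) (hn : 1 ≤ n) (m : ℝ) (hm : 0 < m) (β₁ β₂ : ℝ)
    (u : (Fin n → ℝ) → Fin n → Fin n → ℝ)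
    (hu : ∀ s i j, u s i j = β₁ * s j + β₂ * (s i - s j) ^ 2)
    (p : (Fin n → ℝ) → Fin n → Fin n → ℝ)
    (hp : ∀ s i j, p s i j = Real.exp (u s i j) / ∑ k, Real.exp (u s i k))
    (γ : (Fin n → ℝ) → Fin n → ℝ)
    (hγ : ∀ s j, γ s j = (n : ℝ)⁻¹ * ∑ i, p s i j)
    (f : (Fin n → ℝ) → Fin n → ℝ)
    (hf : ∀ s, f s = m • γ s - s)
    (D : Matrix (Fin n) (Fin n) ℝ)
    (hD : ∀ j l, D j l = (m * β₁ / n) * ((if j = l then (1 : ℝ) else 0) - (n : ℝ)⁻¹)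
        - (if j = l then (1 : ℝ) else 0)) :
    DifferentiableAt ℝ f (fun _ => m / n) ∧
      (∀ j l : Fin n, fderiv ℝ f (fun _ => m / n) (Pi.single l 1) j = D j l) ∧
      (2 ≤ n → ((∀ μ ∈ spectrum ℝ D, μ < 0) ↔ β₁ < (n : ℝ) / m)) := by
  have hn0 : 0 < n := hn
  have hne : (n : ℝ) ≠ 0 := Nat.cast_ne_zero.mpr hn0.ne'
  have hnpos : (0 : ℝ) < n := by exact_mod_cast hn0
  -- rewrite f in closed form
  have hf' : f = fun s j => m * ((n : ℝ)⁻¹ *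
      ∑ i, Real.exp (β₁ * s j + β₂ * (s i - s j) ^ 2) /
        ∑ k, Real.exp (β₁ * s k + β₂ * (s i - s k) ^ 2)) - s j := by
    funext s j
    simp only [hf, Pi.sub_apply, Pi.smul_apply, smul_eq_mul, hγ, hp, hu]
  have hF : HasFDerivAt f
      (ContinuousLinearMap.pi fun j =>
        (m * β₁ / n) • pr n j - (m * β₁ / n ^ 2) • (∑ k, pr n k) - pr n j)
      (fun _ => m / n) := by
    rw [hf']
    exact hasFDerivAt_pi.2 fun j => aux_hasFDerivAt hn0 m β₁ β₂ j
  refine ⟨hF.differentiableAt, ?_, ?_⟩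
  · intro j l
    rw [hF.fderiv, hD]
    simp only [ContinuousLinearMap.pi_apply, ContinuousLinearMap.sub_apply,
      ContinuousLinearMap.smul_apply, ContinuousLinearMap.coe_sum', Finset.sum_apply,
      smul_eq_mul, pr, ContinuousLinearMap.proj_apply]
    rw [Finset.sum_pi_single']
    simp only [Finset.mem_univ, if_true, Pi.single_apply]
    by_cases h : j = l
    · subst h; simp; field_simp
    · simp [h, Ne.symm h]; field_simp
  · intro hn2
    -- the two eigenvalues
    set a : ℝ := m * β₁ / n - 1 with ha
    set b : ℝ := -(m * β₁ / n ^ 2) with hb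
    have hDab : ∀ j l, D j l = (if j = l then a else 0) + b := by
      intro j l
      rw [hD]
      by_cases h : j = l
      · simp only [h, if_true]
        rw [ha, hb]
        field_simp
        ring
      · simp only [h, if_false]
        rw [hb]
        field_simp
        ring
    have hmulVec : ∀ v : Fin n → ℝ, ∀ j, D.mulVec v j = a * v j + b * ∑ k, v k := by
      intro v j
      simp only [Matrix.mulVec, dotProduct, hDab, add_mul, Finset.sum_add_distrib,
        ite_mul, zero_mul, Finset.sum_ite_eq, Finset.mem_univ, if_true, Finset.mul_sum]
    -- characterize membership of the spectrum
    have hspec : ∀ μ : ℝ, μ ∈ spectrum ℝ D ↔ ∃ v : Fin n → ℝ, v ≠ 0 ∧ D.mulVec v = μ • v := by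
      intro μ
      rw [spectrum.mem_iff, Matrix.isUnit_iff_isUnit_det, isUnit_iff_ne_zero, not_ne_iff,
        ← Matrix.exists_mulVec_eq_zero_iff]
      constructor
      · rintro ⟨v, hv0, hv⟩
        refine ⟨v, hv0, ?_⟩
        have := congrArg (fun w => D.mulVec v + w) hv
        funext j
        have hj := congrFun hv j
        simp only [Matrix.sub_mulVec, Pi.sub_apply, Pi.zero_apply, sub_eq_zero] at hj
        have : ((algebraMap ℝ (Matrix (Fin n) (Fin n) ℝ)) μ).mulVec v j = μ * v j := by
          simp [Matrix.algebraMap_eq_diagonal, Matrix.mulVec_diagonal]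
        rw [← hj, this]
        simp
      · rintro ⟨v, hv0, hv⟩
        refine ⟨v, hv0, ?_⟩
        funext j
        have hj := congrFun hv j
        simp only [Matrix.sub_mulVec, Pi.sub_apply, Pi.zero_apply, sub_eq_zero]
        have : ((algebraMap ℝ (Matrix (Fin n) (Fin n) ℝ)) μ).mulVec v j = μ * v j := by
          simp [Matrix.algebraMap_eq_diagonal, Matrix.mulVec_diagonal]
        rw [this, hj]
        simp
    constructor
    · intro hall
      -- a is an eigenvalue, via v = e₀ - e₁
      set i0 : Fin n := ⟨0, by omega⟩ with hi0
      set i1 : Fin n := ⟨1, by omega⟩ with hi1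
      have h01 : i0 ≠ i1 := Fin.ne_of_val_ne (by simp [hi0, hi1])
      have haspec : a ∈ spectrum ℝ D := by
        rw [hspec]
        refine ⟨fun k => (if k = i0 then (1:ℝ) else 0) - (if k = i1 then 1 else 0), ?_, ?_⟩
        · intro h
          have := congrFun h i0
          simp [h01] at this
        · funext j
          have hsum0 : (∑ k, ((if k = i0 then (1:ℝ) else 0) - (if k = i1 then 1 else 0))) = 0 := by
            simp [Finset.sum_sub_distrib, Finset.sum_ite_eq']
          rw [hmulVec, hsum0]
          simp [Pi.smul_apply, smul_eq_mul, mul_comm]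
      have := hall a haspec
      rw [ha] at this
      have h1 : m * β₁ / n < 1 := by linarith
      rw [lt_div_iff₀ hm]
      have h2 : m * β₁ < n := (div_lt_one hnpos).mp h1
      linarith
    · intro hβ μ hμ
      have haneg : a < 0 := by
        rw [ha, sub_neg, div_lt_one hnpos]
        calc m * β₁ < m * ((n : ℝ) / m) := by exact mul_lt_mul_of_pos_left hβ hm
          _ = n := by field_simp
      rw [hspec] at hμ
      obtain ⟨v, hv0, hv⟩ := hμ
      by_cases hT : (∑ k, v k) = 0
      · -- μ = a
        have : ∀ j, a * v j = μ * v j := by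
          intro j
          have := congrFun hv j
          rw [hmulVec, hT] at this
          simpa using this
        obtain ⟨j, hj⟩ : ∃ j, v j ≠ 0 := by
          by_contra h
          push_neg at h
          exact hv0 (funext fun j => h j)
        have : a = μ := mul_right_cancel₀ hj (this j)
        linarith
      · -- μ = a + n b = -1
        have hsum : a * (∑ k, v k) + (n : ℝ) * b * (∑ k, v k) = μ * (∑ k, v k) := by
          have h1 : (∑ j, (a * v j + b * ∑ k, v k)) = ∑ j, μ * v j := by
            refine Finset.sum_congr rfl fun j _ => ?_
            rw [← hmulVec v j, congrFun hv j]; simp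
          rw [Finset.sum_add_distrib, Finset.sum_const, Finset.card_univ, Fintype.card_fin,
            nsmul_eq_mul, ← Finset.mul_sum, ← Finset.mul_sum] at h1
          linear_combination h1
        have hμeq : μ = a + (n : ℝ) * b := by
          have h2 : (a + (n : ℝ) * b) * (∑ k, v k) = μ * (∑ k, v k) := by
            linear_combination hsum
          exact (mul_right_cancel₀ hT h2).symm
        have : a + (n : ℝ) * b = -1 := by
          rw [ha, hb]
          field_simp
          ring
        rw [hμeq, this]
        norm_num
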